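/- Let 𝒳 be a finite set, and let P1, P2 be probability mass functions on 𝒳 with P1(x) > 0 and P2(x) > 0 for all x ∈ 𝒳 and P1 ≠ P2. Let π ∈ (0,1) be the prior probability of hypothesis P1. Then there exists a sequence of decision sets A_n ⊆ 𝒳^n such that the Bayes error probability P_n^{(e)} = π · P1^⊗n(𝒳^n \ A_n) + (1−π) · P2^⊗n(A_n) satisfies lim_{n→∞} (1/n) · log P_n^{(e)} = −C(P1, P2), where C(P1, P2) = −log inf_{t∈ℝ} Σ_{x∈𝒳} P1(x)^{1−t} P2(x)^{t} is the Chernoff information of P1 and P2. -/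

import Mathlib

open Filter Real

/-- Probability of a set of `n`-tuples under the `n`-fold product of the pmf `P`. -/
noncomputable def prodPMFProb {𝒳 : Type*} [Fintype 𝒳] (P : 𝒳 → ℝ) {n : ℕ}
    (A : Set (Fin n → 𝒳)) : ℝ :=
  ∑ x : Fin n → 𝒳, A.indicator (fun y => ∏ i, P (y i)) x

/-- The Chernoff information of two everywhere-positive pmfs on a finite set. -/
noncomputable def chernoffInformation {𝒳 : Type*} [Fintype 𝒳] (P1 P2 : 𝒳 → ℝ) : ℝ :=
  -Real.log (⨅ t : ℝ, ∑ x, P1 x ^ (1 - t) * P2 x ^ t)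

private lemma sum_prod_pi {𝒳 : Type*} [Fintype 𝒳] (n : ℕ) (f : Fin n → 𝒳 → ℝ) :
    ∑ x : Fin n → 𝒳, ∏ i, f i (x i) = ∏ i, ∑ a, f i a := by
  rw [Finset.prod_univ_sum, Fintype.piFinset_univ]

private lemma min_le_rpow {a b t : ℝ} (ha : 0 < a) (hb : 0 < b) (ht0 : 0 ≤ t) (ht1 : t ≤ 1) :
    min a b ≤ a ^ (1 - t) * b ^ t := by
  have hm : 0 < min a b := lt_min ha hb
  calc min a b = min a b ^ (1 - t) * min a b ^ t := by
        rw [← Real.rpow_add hm]; norm_num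
    _ ≤ a ^ (1 - t) * b ^ t :=
        mul_le_mul (Real.rpow_le_rpow hm.le (min_le_left _ _) (by linarith))
          (Real.rpow_le_rpow hm.le (min_le_right _ _) ht0)
          (Real.rpow_nonneg hm.le _) (Real.rpow_nonneg ha.le _)

set_option maxHeartbeats 3000000 in
theorem chernoff_fingerprinting {𝒳 : Type*} [Fintype 𝒳] (P1 P2 : 𝒳 → ℝ)
    (h1pos : ∀ x, 0 < P1 x) (h1sum : ∑ x, P1 x = 1)
    (h2pos : ∀ x, 0 < P2 x) (h2sum : ∑ x, P2 x = 1)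
    (hne : P1 ≠ P2) (p : ℝ) (hp0 : 0 < p) (hp1 : p < 1) :
    ∃ A : (n : ℕ) → Set (Fin n → 𝒳),
      Tendsto (fun n : ℕ => (1 / (n : ℝ)) *
          Real.log (p * prodPMFProb P1 ((A n)ᶜ) + (1 - p) * prodPMFProb P2 (A n)))
        atTop (nhds (-(chernoffInformation P1 P2))) := by
  classical
  have hXne : Nonempty 𝒳 := by
    rcases isEmpty_or_nonempty 𝒳 with h | h
    · rw [Finset.univ_eq_empty, Finset.sum_empty] at h1sum; norm_num at h1sum
    · exact h
  set L : 𝒳 → ℝ := fun a => Real.log (P2 a) - Real.log (P1 a) with hLdef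
  set f : ℝ → ℝ := fun t => ∑ a, P1 a * Real.exp (t * L a) with hfdef
  have hfg : ∀ t : ℝ, ∑ a, P1 a ^ (1 - t) * P2 a ^ t = f t := by
    intro t
    refine Finset.sum_congr rfl fun a _ => ?_
    rw [Real.rpow_def_of_pos (h1pos a), Real.rpow_def_of_pos (h2pos a), ← Real.exp_add,
      show Real.log (P1 a) * (1 - t) + Real.log (P2 a) * t
        = Real.log (P1 a) + t * (Real.log (P2 a) - Real.log (P1 a)) by ring,
      Real.exp_add, Real.exp_log (h1pos a)]
  have hexp_pos : ∀ (t : ℝ) (a : 𝒳), 0 < P1 a * Real.exp (t * L a) :=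
    fun t a => mul_pos (h1pos a) (Real.exp_pos _)
  have hfpos : ∀ t, 0 < f t := fun t =>
    Finset.sum_pos (fun a _ => hexp_pos t a) Finset.univ_nonempty
  have hf0 : f 0 = 1 := by
    simp only [hfdef, zero_mul, Real.exp_zero, mul_one]; exact h1sum
  have hf1 : f 1 = 1 := by
    have h1 : f 1 = ∑ a, P2 a := by
      refine Finset.sum_congr rfl fun a _ => ?_
      rw [one_mul, hLdef, Real.exp_sub, Real.exp_log (h2pos a), Real.exp_log (h1pos a),
        mul_comm, div_mul_cancel₀ _ (h1pos a).ne']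
    rw [h1, h2sum]
  have hfc : Continuous f := by
    apply continuous_finset_sum
    intro a _
    exact continuous_const.mul (Real.continuous_exp.comp (continuous_id.mul continuous_const))
  obtain ⟨t₀, ht₀mem, ht₀min⟩ :=
    (isCompact_Icc : IsCompact (Set.Icc (0:ℝ) 1)).exists_isMinOn
      (Set.nonempty_Icc.mpr zero_le_one) hfc.continuousOn
  obtain ⟨a₀, ha₀⟩ : ∃ a, P1 a ≠ P2 a := by
    by_contra h; push_neg at h; exact hne (funext h)
  have hfhalf : f (1/2) < 1 := by
    have h₁ : f (1/2 : ℝ) = ∑ a, Real.sqrt (P1 a) * Real.sqrt (P2 a) := by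
      rw [← hfg]
      refine Finset.sum_congr rfl fun a _ => ?_
      rw [Real.sqrt_eq_rpow, Real.sqrt_eq_rpow]
      norm_num
    have h₂ : ∀ a : 𝒳, Real.sqrt (P1 a) * Real.sqrt (P2 a) ≤ (P1 a + P2 a) / 2 := by
      intro a
      nlinarith [sq_nonneg (Real.sqrt (P1 a) - Real.sqrt (P2 a)),
        Real.sq_sqrt (h1pos a).le, Real.sq_sqrt (h2pos a).le]
    have h₃ : Real.sqrt (P1 a₀) * Real.sqrt (P2 a₀) < (P1 a₀ + P2 a₀) / 2 := by
      have hss : Real.sqrt (P1 a₀) ≠ Real.sqrt (P2 a₀) := by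
        intro h
        refine ha₀ ?_
        have := congrArg (fun y => y ^ 2) h
        simpa [Real.sq_sqrt (h1pos a₀).le, Real.sq_sqrt (h2pos a₀).le] using this
      have hsq : 0 < (Real.sqrt (P1 a₀) - Real.sqrt (P2 a₀)) ^ 2 :=
        lt_of_le_of_ne (sq_nonneg _) (Ne.symm (pow_ne_zero 2 (sub_ne_zero.mpr hss)))
      nlinarith [Real.sq_sqrt (h1pos a₀).le, Real.sq_sqrt (h2pos a₀).le]
    have h₄ : ∑ a, Real.sqrt (P1 a) * Real.sqrt (P2 a) < ∑ a, (P1 a + P2 a)/2 :=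
      Finset.sum_lt_sum (fun a _ => h₂ a) ⟨a₀, Finset.mem_univ _, h₃⟩
    have h₅ : ∑ a, (P1 a + P2 a)/2 = 1 := by
      rw [← Finset.sum_div, Finset.sum_add_distrib, h1sum, h2sum]; norm_num
    rw [h₁]; linarith
  have hhalfmem : (1/2 : ℝ) ∈ Set.Icc (0:ℝ) 1 := by norm_num
  have hmlt1 : f t₀ < 1 := lt_of_le_of_lt (ht₀min hhalfmem) hfhalf
  have ht₀0 : 0 < t₀ := by
    rcases lt_or_eq_of_le ht₀mem.1 with h | h
    · exact h
    · rw [← h, hf0] at hmlt1; exact absurd hmlt1 (lt_irrefl 1)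
  have ht₀1 : t₀ < 1 := by
    rcases lt_or_eq_of_le ht₀mem.2 with h | h
    · exact h
    · rw [h, hf1] at hmlt1; exact absurd hmlt1 (lt_irrefl 1)
  have hconv : ∀ s t a b : ℝ, 0 ≤ a → 0 ≤ b → a + b = 1 →
      f (a * s + b * t) ≤ a * f s + b * f t := by
    intro s t a b ha hb hab
    have key : ∀ x : 𝒳, P1 x * Real.exp ((a * s + b * t) * L x)
        ≤ a * (P1 x * Real.exp (s * L x)) + b * (P1 x * Real.exp (t * L x)) := by
      intro x
      have hexp := convexOn_exp.2 (Set.mem_univ (s * L x)) (Set.mem_univ (t * L x)) ha hb hab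
      simp only [smul_eq_mul] at hexp
      rw [show (a * s + b * t) * L x = a * (s * L x) + b * (t * L x) by ring]
      calc P1 x * Real.exp (a * (s * L x) + b * (t * L x))
          ≤ P1 x * (a * Real.exp (s * L x) + b * Real.exp (t * L x)) :=
            mul_le_mul_of_nonneg_left hexp (h1pos x).le
        _ = a * (P1 x * Real.exp (s * L x)) + b * (P1 x * Real.exp (t * L x)) := by ring
    calc f (a * s + b * t) = ∑ x, P1 x * Real.exp ((a*s+b*t) * L x) := rfl
      _ ≤ ∑ x, (a * (P1 x * Real.exp (s * L x)) + b * (P1 x * Real.exp (t * L x))) :=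
          Finset.sum_le_sum fun x _ => key x
      _ = a * f s + b * f t := by
          rw [Finset.sum_add_distrib, ← Finset.mul_sum, ← Finset.mul_sum]
  have hout : ∀ t : ℝ, t ∉ Set.Icc (0:ℝ) 1 → 1 ≤ f t := by
    intro t ht
    rw [Set.mem_Icc, not_and_or, not_le, not_le] at ht
    rcases ht with h | h
    · have h1t : (0:ℝ) < 1 - t := by linarith
      have hc := hconv t 1 (1/(1-t)) (-t/(1-t)) (div_nonneg (by norm_num) h1t.le)
        (div_nonneg (by linarith) h1t.le) (by field_simp; ring)
      rw [show (1/(1-t)) * t + (-t/(1-t)) * 1 = 0 by field_simp; ring, hf0, hf1] at hc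
      have h2 := mul_le_mul_of_nonneg_left hc h1t.le
      rw [mul_one, mul_add] at h2
      have e1 : (1-t) * (1/(1-t) * f t) = f t := by field_simp
      have e2 : (1-t) * (-t/(1-t) * 1) = -t := by field_simp
      rw [e1, e2] at h2
      linarith
    · have ht0 : (0:ℝ) < t := by linarith
      have hc := hconv 0 t (1 - 1/t) (1/t) (by
          have : 1/t ≤ 1 := by rw [div_le_one ht0]; linarith
          linarith) (by positivity) (by ring)
      rw [show (1 - 1/t) * 0 + (1/t) * t = 1 by field_simp; ring, hf0, hf1] at hc
      have h2 := mul_le_mul_of_nonneg_left hc ht0.le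
      rw [mul_one, mul_add] at h2
      have e1 : t * ((1 - 1/t) * 1) = t - 1 := by field_simp
      have e2 : t * (1/t * f t) = f t := by field_simp
      rw [e1, e2] at h2
      linarith
  have hglobal : ∀ t : ℝ, f t₀ ≤ f t := by
    intro t
    by_cases ht : t ∈ Set.Icc (0:ℝ) 1
    · exact ht₀min ht
    · exact le_trans hmlt1.le (hout t ht)
  set m := f t₀ with hmdef
  have hm0 : 0 < m := hfpos t₀
  have hCI : -(chernoffInformation P1 P2) = Real.log m := by
    unfold chernoffInformation
    rw [neg_neg]
    congr 1
    rw [show (fun t : ℝ => ∑ x, P1 x ^ (1-t) * P2 x ^ t) = f from funext hfg]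
    exact le_antisymm
      (ciInf_le ⟨0, by rintro y ⟨t, rfl⟩; exact (hfpos t).le⟩ t₀)
      (le_ciInf hglobal)
  -- derivative is zero at the interior minimum
  have hder : HasDerivAt f (∑ a, P1 a * (L a * Real.exp (t₀ * L a))) t₀ := by
    apply HasDerivAt.fun_sum
    intro a _
    have h1 : HasDerivAt (fun t : ℝ => t * L a) (L a) t₀ := by
      simpa using (hasDerivAt_id t₀).mul_const (L a)
    have h2 := (h1.exp).const_mul (P1 a)
    simpa [mul_comm, mul_assoc, mul_left_comm] using h2
  have hder0 : ∑ a, P1 a * (L a * Real.exp (t₀ * L a)) = 0 := by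
    have hloc : IsLocalMin f t₀ := ht₀min.isLocalMin (Icc_mem_nhds ht₀0 ht₀1)
    exact hloc.hasDerivAt_eq_zero hder
  set Q : 𝒳 → ℝ := fun a => P1 a * Real.exp (t₀ * L a) / m with hQdef
  have hQpos : ∀ a, 0 < Q a := fun a => div_pos (hexp_pos t₀ a) hm0
  have hQsum : ∑ a, Q a = 1 := by
    rw [hQdef, ← Finset.sum_div]
    exact div_self (ne_of_gt (hfpos t₀))
  have hQL : ∑ a, Q a * L a = 0 := by
    have h1 : ∑ a, Q a * L a = (∑ a, P1 a * (L a * Real.exp (t₀ * L a))) / m := by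
      rw [Finset.sum_div]
      refine Finset.sum_congr rfl fun a _ => ?_
      rw [hQdef]; ring
    rw [h1, hder0, zero_div]
  have hQm : ∀ a, m * Q a = P1 a * Real.exp (t₀ * L a) := by
    intro a; rw [hQdef]; field_simp
  have hP1Q : ∀ a, P1 a = m * Q a * Real.exp (-(t₀ * L a)) := by
    intro a; rw [hQm, mul_assoc, ← Real.exp_add]; simp
  have hP2Q : ∀ a, P2 a = m * Q a * Real.exp ((1 - t₀) * L a) := by
    intro a
    rw [hQm, mul_assoc, ← Real.exp_add,
      show t₀ * L a + (1 - t₀) * L a = L a by ring, hLdef]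
    rw [Real.exp_sub, Real.exp_log (h2pos a), Real.exp_log (h1pos a),
      mul_comm, div_mul_cancel₀ _ (h1pos a).ne']
  set V := ∑ a, Q a * L a ^ 2 with hVdef
  have hV0 : 0 ≤ V :=
    Finset.sum_nonneg fun a _ => mul_nonneg (hQpos a).le (sq_nonneg _)
  have hQn_sum : ∀ n : ℕ, ∑ x : Fin n → 𝒳, ∏ i, Q (x i) = 1 := by
    intro n
    rw [sum_prod_pi n fun _ => Q]
    simp [hQsum]
  have hpair : ∀ (n : ℕ) (i j : Fin n),
      ∑ x : Fin n → 𝒳, (∏ k, Q (x k)) * (L (x i) * L (x j))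
        = if i = j then V else 0 := by
    intro n i j
    have hrw : ∀ x : Fin n → 𝒳,
        (∏ k, Q (x k)) * (L (x i) * L (x j))
          = ∏ k, (Q (x k) * ((if i = k then L (x k) else 1) * (if j = k then L (x k) else 1))) := by
      intro x
      rw [Finset.prod_mul_distrib, Finset.prod_mul_distrib,
        Finset.prod_ite_eq, Finset.prod_ite_eq]
      simp
    simp only [hrw]
    rw [sum_prod_pi n (fun k a => Q a * ((if i = k then L a else 1) * (if j = k then L a else 1)))]
    by_cases hij : i = j
    · subst hij
      rw [if_pos rfl]
      have hc : ∀ k : Fin n,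
          (∑ a, Q a * ((if i = k then L a else 1) * (if i = k then L a else 1)))
            = if i = k then V else 1 := by
        intro k
        by_cases hk : i = k
        · rw [if_pos hk]
          rw [hVdef]
          refine Finset.sum_congr rfl fun a _ => ?_
          rw [if_pos hk]; ring
        · rw [if_neg hk]
          simp only [if_neg hk, mul_one]
          exact hQsum
      rw [Finset.prod_congr rfl fun k _ => hc k, Finset.prod_ite_eq]
      simp
    · rw [if_neg hij]
      refine Finset.prod_eq_zero (Finset.mem_univ i) ?_
      have hji : j ≠ i := fun h => hij h.symm
      simpa [hji] using hQL
  have hsecond : ∀ n : ℕ,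
      ∑ x : Fin n → 𝒳, (∏ k, Q (x k)) * (∑ i, L (x i)) ^ 2 = n * V := by
    intro n
    calc ∑ x : Fin n → 𝒳, (∏ k, Q (x k)) * (∑ i, L (x i))^2
        = ∑ x : Fin n → 𝒳, ∑ i, ∑ j, (∏ k, Q (x k)) * (L (x i) * L (x j)) := by
          refine Finset.sum_congr rfl fun x _ => ?_
          rw [sq, Finset.sum_mul_sum, Finset.mul_sum]
          refine Finset.sum_congr rfl fun i _ => ?_
          rw [Finset.mul_sum]
      _ = ∑ i : Fin n, ∑ j : Fin n, ∑ x : Fin n → 𝒳, (∏ k, Q (x k)) * (L (x i) * L (x j)) := by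
          rw [Finset.sum_comm]
          exact Finset.sum_congr rfl fun i _ => Finset.sum_comm
      _ = ∑ i : Fin n, ∑ j : Fin n, (if i = j then V else 0) := by
          exact Finset.sum_congr rfl fun i _ => Finset.sum_congr rfl fun j _ => hpair n i j
      _ = n * V := by
          simp [Finset.sum_ite_eq]
  -- the decision sets and the error probability
  set A : (n : ℕ) → Set (Fin n → 𝒳) := fun n => {x | ∏ i, P2 (x i) ≤ ∏ i, P1 (x i)} with hAdef
  set err : ℕ → ℝ :=
    fun n => p * prodPMFProb P1 ((A n)ᶜ) + (1 - p) * prodPMFProb P2 (A n) with herrdef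
  refine ⟨A, ?_⟩
  have hgoalrw : (fun n : ℕ => (1 / (n : ℝ)) *
      Real.log (p * prodPMFProb P1 ((A n)ᶜ) + (1 - p) * prodPMFProb P2 (A n)))
      = fun n : ℕ => (1 / (n : ℝ)) * Real.log (err n) := rfl
  rw [hgoalrw, ← hCI.symm]
  -- basic positivity
  have hprod1pos : ∀ {n : ℕ} (x : Fin n → 𝒳), 0 < ∏ i, P1 (x i) :=
    fun x => Finset.prod_pos fun i _ => h1pos _
  have hprod2pos : ∀ {n : ℕ} (x : Fin n → 𝒳), 0 < ∏ i, P2 (x i) :=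
    fun x => Finset.prod_pos fun i _ => h2pos _
  have hminpos : ∀ {n : ℕ} (x : Fin n → 𝒳),
      0 < min (∏ i, P1 (x i)) (∏ i, P2 (x i)) :=
    fun x => lt_min (hprod1pos x) (hprod2pos x)
  set B : ℕ → ℝ := fun n => ∑ x : Fin n → 𝒳, min (∏ i, P1 (x i)) (∏ i, P2 (x i)) with hBdef
  have hBpos : ∀ n, 0 < B n := fun n =>
    Finset.sum_pos (fun x _ => hminpos x) Finset.univ_nonempty
  have herr_eq : ∀ n : ℕ, err n = ∑ x : Fin n → 𝒳,
      (p * ((A n)ᶜ).indicator (fun y => ∏ i, P1 (y i)) x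
        + (1 - p) * (A n).indicator (fun y => ∏ i, P2 (y i)) x) := by
    intro n
    simp only [herrdef]
    unfold prodPMFProb
    rw [Finset.mul_sum, Finset.mul_sum, ← Finset.sum_add_distrib]
  set c : ℝ := min p (1 - p) with hcdef
  have hc0 : 0 < c := lt_min hp0 (by linarith)
  have hcp : c ≤ p := min_le_left _ _
  have hcq : c ≤ 1 - p := min_le_right _ _
  have hterm_le : ∀ {n : ℕ} (x : Fin n → 𝒳),
      p * ((A n)ᶜ).indicator (fun y => ∏ i, P1 (y i)) x
        + (1 - p) * (A n).indicator (fun y => ∏ i, P2 (y i)) x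
        ≤ min (∏ i, P1 (x i)) (∏ i, P2 (x i)) := by
    intro n x
    by_cases hx : x ∈ A n
    · rw [Set.indicator_of_notMem (Set.notMem_compl_iff.mpr hx), Set.indicator_of_mem hx]
      have hle : ∏ i, P2 (x i) ≤ ∏ i, P1 (x i) := by simpa [hAdef] using hx
      rw [min_eq_right hle, mul_zero, zero_add]
      nlinarith [hprod2pos x]
    · have hxc : x ∈ (A n)ᶜ := hx
      rw [Set.indicator_of_mem hxc, Set.indicator_of_notMem hx]
      have hlt : ∏ i, P1 (x i) < ∏ i, P2 (x i) := by
        simp only [hAdef, Set.mem_setOf_eq] at hx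
        exact not_le.mp hx
      rw [min_eq_left hlt.le, mul_zero, add_zero]
      nlinarith [hprod1pos x]
  have hterm_ge : ∀ {n : ℕ} (x : Fin n → 𝒳),
      c * min (∏ i, P1 (x i)) (∏ i, P2 (x i))
        ≤ p * ((A n)ᶜ).indicator (fun y => ∏ i, P1 (y i)) x
          + (1 - p) * (A n).indicator (fun y => ∏ i, P2 (y i)) x := by
    intro n x
    by_cases hx : x ∈ A n
    · rw [Set.indicator_of_notMem (Set.notMem_compl_iff.mpr hx), Set.indicator_of_mem hx]
      have hle : ∏ i, P2 (x i) ≤ ∏ i, P1 (x i) := by simpa [hAdef] using hx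
      rw [min_eq_right hle, mul_zero, zero_add]
      exact mul_le_mul_of_nonneg_right hcq (hprod2pos x).le
    · have hxc : x ∈ (A n)ᶜ := hx
      rw [Set.indicator_of_mem hxc, Set.indicator_of_notMem hx]
      have hlt : ∏ i, P1 (x i) < ∏ i, P2 (x i) := by
        simp only [hAdef, Set.mem_setOf_eq] at hx
        exact not_le.mp hx
      rw [min_eq_left hlt.le, mul_zero, add_zero]
      exact mul_le_mul_of_nonneg_right hcp (hprod1pos x).le
  have herr_le_B : ∀ n, err n ≤ B n := by
    intro n
    rw [herr_eq n]
    simp only [hBdef]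
    exact Finset.sum_le_sum fun x _ => hterm_le x
  have hcB_le_err : ∀ n, c * B n ≤ err n := by
    intro n
    rw [herr_eq n]
    simp only [hBdef]
    rw [Finset.mul_sum]
    exact Finset.sum_le_sum fun x _ => hterm_ge x
  have herr_pos : ∀ n, 0 < err n := fun n =>
    lt_of_lt_of_le (mul_pos hc0 (hBpos n)) (hcB_le_err n)
  have hB_le_pow : ∀ n, B n ≤ m ^ n := by
    intro n
    have h1 : ∀ x : Fin n → 𝒳, min (∏ i, P1 (x i)) (∏ i, P2 (x i))
        ≤ ∏ i, (P1 (x i) ^ (1 - t₀) * P2 (x i) ^ t₀) := by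
      intro x
      have he : (∏ i, P1 (x i)) ^ (1 - t₀) * (∏ i, P2 (x i)) ^ t₀
          = ∏ i, (P1 (x i) ^ (1 - t₀) * P2 (x i) ^ t₀) := by
        rw [← Real.finset_prod_rpow _ _ (fun i _ => (h1pos (x i)).le) _,
          ← Real.finset_prod_rpow _ _ (fun i _ => (h2pos (x i)).le) _,
          ← Finset.prod_mul_distrib]
      exact he ▸ min_le_rpow (hprod1pos x) (hprod2pos x) ht₀0.le ht₀1.le
    calc B n ≤ ∑ x : Fin n → 𝒳, ∏ i, (P1 (x i) ^ (1 - t₀) * P2 (x i) ^ t₀) := by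
          simp only [hBdef]
          exact Finset.sum_le_sum fun x _ => h1 x
      _ = ∏ _i : Fin n, ∑ a, P1 a ^ (1 - t₀) * P2 a ^ t₀ :=
          sum_prod_pi n fun _ a => P1 a ^ (1 - t₀) * P2 a ^ t₀
      _ = m ^ n := by
          rw [Finset.prod_const, Finset.card_univ, Fintype.card_fin, hfg t₀]
  have hexp_prod : ∀ (n : ℕ) (x : Fin n → 𝒳) (u : ℝ),
      ∏ i, Real.exp (u * L (x i)) = Real.exp (u * ∑ i, L (x i)) := by
    intro n x u
    rw [← Real.exp_sum, Finset.mul_sum]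
  have hP1_prod : ∀ (n : ℕ) (x : Fin n → 𝒳),
      ∏ i, P1 (x i) = m ^ n * (∏ i, Q (x i)) * Real.exp (-t₀ * ∑ i, L (x i)) := by
    intro n x
    calc ∏ i, P1 (x i) = ∏ i, (m * Q (x i) * Real.exp (-t₀ * L (x i))) := by
          refine Finset.prod_congr rfl fun i _ => ?_
          rw [hP1Q (x i), neg_mul]
      _ = m ^ n * (∏ i, Q (x i)) * Real.exp (-t₀ * ∑ i, L (x i)) := by
          rw [Finset.prod_mul_distrib, Finset.prod_mul_distrib, Finset.prod_const,
            Finset.card_univ, Fintype.card_fin, hexp_prod n x (-t₀)]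
  have hP2_prod : ∀ (n : ℕ) (x : Fin n → 𝒳),
      ∏ i, P2 (x i) = m ^ n * (∏ i, Q (x i)) * Real.exp ((1 - t₀) * ∑ i, L (x i)) := by
    intro n x
    calc ∏ i, P2 (x i) = ∏ i, (m * Q (x i) * Real.exp ((1 - t₀) * L (x i))) :=
          Finset.prod_congr rfl fun i _ => hP2Q (x i)
      _ = m ^ n * (∏ i, Q (x i)) * Real.exp ((1 - t₀) * ∑ i, L (x i)) := by
          rw [Finset.prod_mul_distrib, Finset.prod_mul_distrib, Finset.prod_const,
            Finset.card_univ, Fintype.card_fin, hexp_prod n x (1 - t₀)]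
  have hmin_lb : ∀ (n : ℕ) (d : ℝ) (x : Fin n → 𝒳), 0 ≤ d → |∑ i, L (x i)| ≤ d →
      m ^ n * (∏ i, Q (x i)) * Real.exp (-d) ≤ min (∏ i, P1 (x i)) (∏ i, P2 (x i)) := by
    intro n d x hd hx
    have hS := abs_le.mp hx
    have hQprod : (0:ℝ) ≤ ∏ i, Q (x i) := Finset.prod_nonneg fun i _ => (hQpos _).le
    have hbase : (0:ℝ) ≤ m ^ n * ∏ i, Q (x i) := mul_nonneg (pow_nonneg hm0.le n) hQprod
    refine le_min ?_ ?_
    · rw [hP1_prod n x]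
      refine mul_le_mul_of_nonneg_left (Real.exp_le_exp.mpr ?_) hbase
      nlinarith [ht₀0.le, ht₀1.le, hS.1, hS.2]
    · rw [hP2_prod n x]
      refine mul_le_mul_of_nonneg_left (Real.exp_le_exp.mpr ?_) hbase
      nlinarith [ht₀0.le, ht₀1.le, hS.1, hS.2]
  -- the limit
  rw [Metric.tendsto_atTop]
  intro ε hε
  have hδ0 : 0 < ε / 4 := by linarith
  set δ : ℝ := ε / 4 with hδdef
  obtain ⟨N₁, hN₁⟩ := exists_nat_ge (2 * V / δ ^ 2)
  obtain ⟨N₂, hN₂⟩ := exists_nat_ge ((-(Real.log c + Real.log (1/2))) / δ)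
  refine ⟨max (max N₁ N₂) 1, fun n hn => ?_⟩
  have hn1 : 1 ≤ n := le_trans (le_max_right _ _) hn
  have hn0 : (0:ℝ) < n := by exact_mod_cast Nat.lt_of_lt_of_le Nat.zero_lt_one hn1
  have hnN₁ : (N₁ : ℝ) ≤ n :=
    Nat.cast_le.mpr (le_trans (le_trans (le_max_left _ _) (le_max_left _ _)) hn)
  have hnN₂ : (N₂ : ℝ) ≤ n :=
    Nat.cast_le.mpr (le_trans (le_trans (le_max_right _ _) (le_max_left _ _)) hn)
  set Gf : Finset (Fin n → 𝒳) :=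
    Finset.univ.filter (fun x => |∑ i, L (x i)| ≤ (n:ℝ) * δ) with hGfdef
  set q : ℝ := ∑ x ∈ Gf, ∏ i, Q (x i) with hqdef
  have hsplit : q + ∑ x ∈ Gfᶜ, ∏ i, Q (x i) = 1 := by
    rw [hqdef, Finset.sum_add_sum_compl, hQn_sum n]
  have htail : ∑ x ∈ Gfᶜ, ∏ i, Q (x i) ≤ V / ((n:ℝ) * δ ^ 2) := by
    have hnd : (0:ℝ) < (n:ℝ) * δ := mul_pos hn0 hδ0
    have h1 : ∀ x ∈ Gfᶜ, ∏ i, Q (x i)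
        ≤ (∏ i, Q (x i)) * ((∑ i, L (x i)) ^ 2 / ((n:ℝ) * δ) ^ 2) := by
      intro x hx
      have hxmem : ¬ |∑ i, L (x i)| ≤ (n:ℝ) * δ := by
        simpa [hGfdef] using hx
      push_neg at hxmem
      have h2 : ((n:ℝ) * δ) ^ 2 ≤ (∑ i, L (x i)) ^ 2 := by
        have h3 := sq_abs (∑ i, L (x i))
        nlinarith [abs_nonneg (∑ i, L (x i))]
      have h3 : (1:ℝ) ≤ (∑ i, L (x i)) ^ 2 / ((n:ℝ)*δ)^2 :=
        (one_le_div (by positivity)).mpr h2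
      nlinarith [Finset.prod_nonneg (fun i (_ : i ∈ Finset.univ) => (hQpos (x i)).le)]
    calc ∑ x ∈ Gfᶜ, ∏ i, Q (x i)
        ≤ ∑ x ∈ Gfᶜ, (∏ i, Q (x i)) * ((∑ i, L (x i))^2 / ((n:ℝ)*δ)^2) :=
          Finset.sum_le_sum h1
      _ ≤ ∑ x : Fin n → 𝒳, (∏ i, Q (x i)) * ((∑ i, L (x i))^2 / ((n:ℝ)*δ)^2) :=
          Finset.sum_le_sum_of_subset_of_nonneg (Finset.subset_univ _)
            (fun x _ _ => mul_nonneg (Finset.prod_nonneg fun i _ => (hQpos _).le)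
              (div_nonneg (sq_nonneg _) (sq_nonneg _)))
      _ = (∑ x : Fin n → 𝒳, (∏ i, Q (x i)) * (∑ i, L (x i))^2) / ((n:ℝ)*δ)^2 := by
          rw [Finset.sum_div]
          exact Finset.sum_congr rfl fun x _ => (mul_div_assoc _ _ _).symm
      _ = ((n:ℝ) * V) / ((n:ℝ)*δ)^2 := by rw [hsecond n]
      _ = V / ((n:ℝ) * δ^2) := by
          field_simp
  have hq2 : 1/2 ≤ q := by
    have hVn : V / ((n:ℝ) * δ^2) ≤ 1/2 := by
      rw [div_le_iff₀ (by positivity)]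
      have h5 := (div_le_iff₀ (by positivity : (0:ℝ) < δ^2)).mp (le_trans hN₁ hnN₁)
      linarith
    linarith [hsplit, htail]
  have hBlow : m ^ n * Real.exp (-((n:ℝ) * δ)) * q ≤ B n := by
    have h1 : ∀ x ∈ Gf, m ^ n * (∏ i, Q (x i)) * Real.exp (-((n:ℝ)*δ))
        ≤ min (∏ i, P1 (x i)) (∏ i, P2 (x i)) := by
      intro x hx
      exact hmin_lb n ((n:ℝ)*δ) x (by positivity) (by simpa [hGfdef] using hx)
    calc m ^ n * Real.exp (-((n:ℝ)*δ)) * q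
        = ∑ x ∈ Gf, m ^ n * (∏ i, Q (x i)) * Real.exp (-((n:ℝ)*δ)) := by
          rw [hqdef, Finset.mul_sum]
          exact Finset.sum_congr rfl fun x _ => by ring
      _ ≤ ∑ x ∈ Gf, min (∏ i, P1 (x i)) (∏ i, P2 (x i)) := Finset.sum_le_sum h1
      _ ≤ B n := by
          simp only [hBdef]
          exact Finset.sum_le_sum_of_subset_of_nonneg (Finset.subset_univ _)
            (fun x _ _ => (hminpos x).le)
  have herrlow : c * (m ^ n * Real.exp (-((n:ℝ)*δ)) * (1/2)) ≤ err n := by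
    have h0 : (0:ℝ) ≤ m ^ n * Real.exp (-((n:ℝ)*δ)) := by positivity
    have h1 : m ^ n * Real.exp (-((n:ℝ)*δ)) * (1/2)
        ≤ m ^ n * Real.exp (-((n:ℝ)*δ)) * q := mul_le_mul_of_nonneg_left hq2 h0
    calc c * (m ^ n * Real.exp (-((n:ℝ)*δ)) * (1/2))
        ≤ c * B n := mul_le_mul_of_nonneg_left (le_trans h1 hBlow) hc0.le
      _ ≤ err n := hcB_le_err n
  have hloglow : Real.log c + (((n:ℝ)) * Real.log m + (-((n:ℝ)*δ)) + Real.log (1/2))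
      ≤ Real.log (err n) := by
    have hpos : (0:ℝ) < c * (m ^ n * Real.exp (-((n:ℝ)*δ)) * (1/2)) := by positivity
    have h1 := Real.log_le_log hpos herrlow
    rw [Real.log_mul (ne_of_gt hc0) (by positivity),
      Real.log_mul (by positivity) (by norm_num),
      Real.log_mul (by positivity) (Real.exp_ne_zero _),
      Real.log_pow, Real.log_exp] at h1
    linarith [h1]
  have hlogup : Real.log (err n) ≤ (n:ℝ) * Real.log m := by
    have h1 : err n ≤ m ^ n := le_trans (herr_le_B n) (hB_le_pow n)
    have h2 := Real.log_le_log (herr_pos n) h1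
    rwa [Real.log_pow] at h2
  rw [Real.dist_eq, abs_lt]
  have hKn : -(Real.log c + Real.log (1/2)) ≤ (n:ℝ) * δ := by
    have h5 := (div_le_iff₀ hδ0).mp (le_trans hN₂ hnN₂)
    linarith
  constructor
  · have h2 : (n:ℝ) * Real.log m - 2*((n:ℝ)*δ) ≤ Real.log (err n) := by linarith
    have h3 := mul_le_mul_of_nonneg_left h2 (by positivity : (0:ℝ) ≤ 1/(n:ℝ))
    have h4 : (1/(n:ℝ)) * ((n:ℝ) * Real.log m - 2*((n:ℝ)*δ)) = Real.log m - 2*δ := by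
      field_simp
    rw [h4] at h3
    have hδε : 2*δ < ε := by rw [hδdef]; linarith
    linarith
  · have h3 := mul_le_mul_of_nonneg_left hlogup (by positivity : (0:ℝ) ≤ 1/(n:ℝ))
    have h4 : (1/(n:ℝ)) * ((n:ℝ) * Real.log m) = Real.log m := by field_simp
    rw [h4] at h3
    linarith
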